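/- (Proposition 6: bivariate queries via message passing.) Let {i, j} ∈ E be an edge and let Q ⊆ ℝ × ℝ be a Lebesgue-measurable query set on the pair (x_i, x_j). Define the updated message m*_{j→i} : ℝ → [0, ∞] by m*_{j→i}(t) = ∫_ℝ ( ∏_{c ∈ N(j)∖{i}} m_{c→j}(x_j) ) · 1[(t, x_j) ∈ D_{ij} and (t, x_j) ∈ Q] · 1[x_j ∈ D_j] dx_j (this product of incoming messages is the quantity the paper writes as b_j(x_j)/m_{i→j}(x_j)). Then the Lebesgue volume of Δ ∩ {x ∈ ℝ^V : (x_i, x_j) ∈ Q} equals ∫_ℝ 1[t ∈ D_i] · m*_{j→i}(t) · ∏_{c ∈ N(i)∖{j}} m_{c→i}(t) dt. -/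

import Mathlib

open MeasureTheory
open scoped ENNReal

noncomputable section

/-- The model region `Δ ⊆ ℝ^V` : the set of points `x` with `x_i ∈ D_i` for every vertex
`i` and `(x_i, x_j) ∈ D_{ij}` for every edge `{i,j}`. -/
def mpModel {V : Type*} (G : SimpleGraph V) (D : V → Set ℝ) (Dij : V → V → Set (ℝ × ℝ)) :
    Set (V → ℝ) :=
  {x | (∀ i, x i ∈ D i) ∧ ∀ i j, G.Adj i j → (x i, x j) ∈ Dij i j}

namespace BQMP

open SimpleGraph Finset Function

set_option linter.unusedSectionVars false

variable {V : Type*} [Fintype V] [DecidableEq V]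

open Classical in
/-- the set of vertices on `c`'s side of the edge `{c,r}`. -/
def side (G : SimpleGraph V) (c r : V) : Finset V :=
  Finset.univ.filter fun v => (G.deleteEdges {s(c, r)}).Reachable c v

variable {G : SimpleGraph V} [DecidableRel G.Adj]

lemma mem_side {c r v : V} :
    v ∈ side G c r ↔ (G.deleteEdges {s(c, r)}).Reachable c v := by
  classical simp [side]

lemma not_reachable (hG : G.IsTree) {c r : V} (h : G.Adj c r) :
    ¬ (G.deleteEdges {s(c, r)}).Reachable c r :=
  ((isAcyclic_iff_forall_adj_isBridge.mp hG.2) h)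

lemma self_mem_side {c r : V} : c ∈ side G c r := mem_side.mpr (Reachable.refl c)

lemma side_of_walk {c r v : V} (p : G.Walk c v) (hr : r ∉ p.support) : v ∈ side G c r := by
  refine mem_side.mpr ⟨p.transfer _ fun e he => ?_⟩
  rw [edgeSet_deleteEdges]
  refine ⟨p.edges_subset_edgeSet he, ?_⟩
  simp only [Set.mem_singleton_iff]
  rintro rfl
  exact hr (p.snd_mem_support_of_mem_edges he)

lemma walk_of_side (hG : G.IsTree) {c r v : V} (h : G.Adj c r) (hv : v ∈ side G c r) :
    ∃ p : G.Walk c v, r ∉ p.support := by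
  obtain ⟨q⟩ := mem_side.mp hv
  by_cases hr : r ∈ q.support
  · exact absurd ⟨q.takeUntil r hr⟩ (not_reachable hG h)
  · refine ⟨q.transfer G fun e he => ?_, ?_⟩
    · exact (edgeSet_deleteEdges _ ▸ q.edges_subset_edgeSet he).1
    · rwa [Walk.support_transfer]

lemma not_mem_side (hG : G.IsTree) {c r : V} (h : G.Adj c r) : r ∉ side G c r := by
  intro hr
  exact not_reachable hG h (mem_side.mp hr)

lemma side_disjoint' (hG : G.IsTree) {c r v : V} (h : G.Adj c r)
    (h1 : v ∈ side G c r) (h2 : v ∈ side G r c) : False := by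
  rw [mem_side] at h1 h2
  rw [Sym2.eq_swap (a := r) (b := c)] at h2
  exact not_reachable hG h (h1.trans h2.symm)

lemma side_union (hG : G.IsTree) {c r : V} (h : G.Adj c r) (v : V) :
    v ∈ side G c r ∨ v ∈ side G r c := by
  obtain ⟨p0⟩ := hG.1.preconnected c v
  obtain ⟨p, hp⟩ := p0.toPath
  by_cases hr : r ∈ p.support
  · right
    refine side_of_walk (p.dropUntil r hr) ?_
    intro hc
    have hspec := p.take_spec hr
    have hnodup : p.support.Nodup := hp.support_nodup
    rw [← hspec, Walk.support_append] at hnodup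
    have hdisj := List.disjoint_of_nodup_append hnodup
    have hc' : c ∈ ((p.dropUntil r hr).support).tail := by
      have h2 := (p.dropUntil r hr).support_eq_cons
      rw [h2, List.mem_cons] at hc
      rcases hc with hc | hc
      · exact absurd hc h.ne
      · exact hc
    exact hdisj (Walk.start_mem_support _) hc'
  · exact Or.inl (side_of_walk p hr)

lemma side_subset (hG : G.IsTree) {c r d : V} (hcr : G.Adj c r) (hcd : G.Adj c d)
    (hdr : d ≠ r) : side G r c ⊆ side G c d := by
  intro v hv
  obtain ⟨p, hc⟩ := walk_of_side hG hcr.symm hv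
  refine mem_side.mpr ⟨Walk.cons ?_ (p.transfer _ fun e he => ?_)⟩
  · rw [deleteEdges_adj]
    refine ⟨hcr, ?_⟩
    simp only [Set.mem_singleton_iff, Sym2.congr_right]
    exact fun hrd => hdr hrd.symm
  · rw [edgeSet_deleteEdges]
    refine ⟨p.edges_subset_edgeSet he, ?_⟩
    simp only [Set.mem_singleton_iff]
    rintro rfl
    exact hc (p.fst_mem_support_of_mem_edges he)

lemma exists_side (hG : G.IsTree) {v c : V} (hvc : v ≠ c) :
    ∃ d, G.Adj c d ∧ v ∈ side G d c := by
  obtain ⟨p0⟩ := hG.1.preconnected c v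
  obtain ⟨p, hp⟩ := p0.toPath
  cases p with
  | nil => exact absurd rfl hvc
  | cons h' q =>
    rw [Walk.cons_isPath_iff] at hp
    exact ⟨_, h', side_of_walk q hp.2⟩

lemma sides_pairwise (hG : G.IsTree) {c d d' : V} (h1 : G.Adj c d) (h2 : G.Adj c d')
    (hdd : d ≠ d') : ∀ v, v ∈ side G d c → v ∈ side G d' c → False := by
  intro v hv hv'
  have hsub : side G d c ⊆ side G c d' := side_subset hG h1 h2 (Ne.symm hdd)
  exact side_disjoint' hG h2 (hsub hv) hv'

lemma side_sub_side (hG : G.IsTree) {c r d : V} (hcr : G.Adj c r) (hcd : G.Adj c d)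
    (hdr : d ≠ r) : side G d c ⊆ side G c r :=
  side_subset hG hcd hcr fun hh => hdr hh.symm

lemma not_mem_side' (hG : G.IsTree) {c d : V} (h : G.Adj c d) : c ∉ side G d c := by
  intro hc
  exact side_disjoint' hG h self_mem_side hc

lemma side_erase (hG : G.IsTree) {c r : V} (h : G.Adj c r) :
    (side G c r).erase c = ((G.neighborFinset c).erase r).biUnion fun d => side G d c := by
  ext v
  simp only [Finset.mem_erase, Finset.mem_biUnion, mem_neighborFinset]
  constructor
  · rintro ⟨hvc, hv⟩
    obtain ⟨d, hd, hvd⟩ := exists_side hG hvc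
    refine ⟨d, ⟨?_, hd⟩, hvd⟩
    rintro rfl
    exact side_disjoint' hG h hv hvd
  · rintro ⟨d, ⟨hdr, hd⟩, hvd⟩
    exact ⟨fun hvc => not_mem_side' hG hd (hvc ▸ hvd),
      side_sub_side hG h hd hdr hvd⟩

lemma univ_erase (hG : G.IsTree) (i : V) :
    Finset.univ.erase i = (G.neighborFinset i).biUnion fun c => side G c i := by
  ext v
  simp only [Finset.mem_erase, Finset.mem_biUnion, mem_neighborFinset, Finset.mem_univ,
    and_true]
  constructor
  · intro hvi
    obtain ⟨d, hd, hvd⟩ := exists_side hG hvi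
    exact ⟨d, hd, hvd⟩
  · rintro ⟨d, hd, hvd⟩
    intro hvi
    exact not_mem_side' hG hd (hvi ▸ hvd)

lemma adj_side (hG : G.IsTree) {c d v w : V} (hdc : G.Adj d c) (hv : v ∈ side G d c)
    (hvw : G.Adj v w) (hw : w ∉ side G d c) : v = d ∧ w = c := by
  have hsvw : s(v, w) = s(d, c) := by
    by_contra hne
    apply hw
    refine mem_side.mp hv |>.trans ⟨Walk.cons ?_ Walk.nil⟩ |> mem_side.mpr
    rw [deleteEdges_adj]
    exact ⟨hvw, by simpa using hne⟩
  rw [Sym2.eq_iff] at hsvw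
  rcases hsvw with ⟨rfl, rfl⟩ | ⟨rfl, rfl⟩
  · exact ⟨rfl, rfl⟩
  · exact absurd hv (not_mem_side' hG hdc.symm)


section Meas

variable {V : Type*} [Fintype V] [DecidableEq V]
variable {G : SimpleGraph V} [DecidableRel G.Adj]
variable (G) in
/-- vertex indicator -/
def vind (D : V → Set ℝ) (v : V) (x : V → ℝ) : ℝ≥0∞ := (D v).indicator 1 (x v)

/-- edge indicator -/
def eind (Dij : V → V → Set (ℝ × ℝ)) (v w : V) (x : V → ℝ) : ℝ≥0∞ :=
  (Dij v w).indicator 1 (x v, x w)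

variable (G) in
/-- full constraint product over `S` -/
def bigH (D : V → Set ℝ) (Dij : V → V → Set (ℝ × ℝ)) (S : Finset V) (x : V → ℝ) : ℝ≥0∞ :=
  ∏ v ∈ S, (vind D v x * ∏ w ∈ G.neighborFinset v ∩ S, eind Dij v w x)

variable {D : V → Set ℝ} {Dij : V → V → Set (ℝ × ℝ)}

lemma vind_le_one {v x} : vind D v x ≤ 1 := by
  unfold vind; by_cases h : x v ∈ D v <;> simp [h]

lemma eind_le_one {v w x} : eind Dij v w x ≤ 1 := by
  unfold eind; by_cases h : ((x v, x w) : ℝ × ℝ) ∈ Dij v w <;> simp [h]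

lemma eind_idem {v w : V} {x} : eind Dij v w x * eind Dij v w x = eind Dij v w x := by
  unfold eind; by_cases h : ((x v, x w) : ℝ × ℝ) ∈ Dij v w <;> simp [h]

lemma eind_symm (hsym : ∀ i j, ∀ p : ℝ × ℝ, p ∈ Dij i j ↔ p.swap ∈ Dij j i) (v w : V) (x) :
    eind Dij v w x = eind Dij w v x := by
  unfold eind
  by_cases h : ((x v, x w) : ℝ × ℝ) ∈ Dij v w
  · rw [Set.indicator_of_mem h, Set.indicator_of_mem (show ((x w, x v) : ℝ × ℝ) ∈ Dij w v from (hsym v w (x v, x w)).mp h)]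
    rfl
  · rw [Set.indicator_of_notMem h, Set.indicator_of_notMem
      (show ((x w, x v) : ℝ × ℝ) ∉ Dij w v from fun hc => h ((hsym v w (x v, x w)).mpr hc))]

lemma measurable_vind (hD : ∀ i, MeasurableSet (D i)) (v : V) : Measurable (vind D v) :=
  ((measurable_const.indicator (hD v)).comp (measurable_pi_apply v))

lemma measurable_eind (hDij : ∀ i j, MeasurableSet (Dij i j)) (v w : V) :
    Measurable (eind Dij v w) :=
  (measurable_const.indicator (hDij v w)).comp
    ((measurable_pi_apply v).prodMk (measurable_pi_apply w))

lemma measurable_bigH (hD : ∀ i, MeasurableSet (D i)) (hDij : ∀ i j, MeasurableSet (Dij i j))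
    (S : Finset V) : Measurable (bigH G D Dij S) := by
  refine Finset.measurable_prod _ fun v _ => ?_
  exact (measurable_vind hD v).mul (Finset.measurable_prod _ fun w _ => measurable_eind hDij v w)

lemma vind_update {v : V} {s : Finset V} (hv : v ∉ s) (x y) :
    vind D v (Function.updateFinset x s y) = vind D v x := by
  unfold vind
  rw [Function.updateFinset_def]
  simp [hv]

lemma eind_update {v w : V} {s : Finset V} (hv : v ∉ s) (hw : w ∉ s) (x y) :
    eind Dij v w (Function.updateFinset x s y) = eind Dij v w x := by
  unfold eind
  rw [Function.updateFinset_def]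
  simp [hv, hw]

lemma bigH_update {S s : Finset V} (h : ∀ v ∈ S, v ∉ s) (x y) :
    bigH G D Dij S (Function.updateFinset x s y) = bigH G D Dij S x := by
  unfold bigH
  refine Finset.prod_congr rfl fun v hv => ?_
  rw [vind_update (h v hv)]
  congr 1
  refine Finset.prod_congr rfl fun w hw => ?_
  exact eind_update (h v hv) (h w (Finset.mem_of_mem_inter_right hw)) x y

/-- pull an `s`-independent factor out of a marginalization (left). -/
lemma pull_left {f g : (V → ℝ) → ℝ≥0∞} {s : Finset V}
    (hf : ∀ x y, f (Function.updateFinset x s y) = f x) (hg : Measurable g) (x : V → ℝ) :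
    (∫⋯∫⁻_s, fun y => f y * g y) x = f x * (∫⋯∫⁻_s, g) x := by
  rw [MeasureTheory.lmarginal]
  simp only [hf]
  rw [MeasureTheory.lintegral_const_mul'' (f := fun y => g (Function.updateFinset x s y)) _
    ((hg.comp measurable_updateFinset).aemeasurable)]
  rfl

/-- pull an `s`-independent factor out of a marginalization (right). -/
lemma pull_right {f g : (V → ℝ) → ℝ≥0∞} {s : Finset V}
    (hf : ∀ x y, f (Function.updateFinset x s y) = f x) (hg : Measurable g) (x : V → ℝ) :
    (∫⋯∫⁻_s, fun y => g y * f y) x = (∫⋯∫⁻_s, g) x * f x := by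
  rw [MeasureTheory.lmarginal]
  simp only [hf]
  rw [MeasureTheory.lintegral_mul_const'' (f := fun y => g (Function.updateFinset x s y)) _
    ((hg.comp measurable_updateFinset).aemeasurable)]
  rfl

end Meas

section Split

variable {V : Type*} [Fintype V] [DecidableEq V]
variable {G : SimpleGraph V} [DecidableRel G.Adj]
variable {D : V → Set ℝ} {Dij : V → V → Set (ℝ × ℝ)}

lemma side_prod (hG : G.IsTree) {c d : V} {S : Finset V} (hdc : G.Adj c d) (hcS : c ∈ S)
    (hsub : side G d c ⊆ S) (x : V → ℝ) :
    (∏ v ∈ side G d c, (vind D v x * ∏ w ∈ G.neighborFinset v ∩ S, eind Dij v w x))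
      = eind Dij d c x * bigH G D Dij (side G d c) x := by
  have hdc' : G.Adj d c := hdc.symm
  have hcns : c ∉ side G d c := not_mem_side' hG hdc
  have h1 : ∀ v ∈ side G d c,
      (vind D v x * ∏ w ∈ G.neighborFinset v ∩ S, eind Dij v w x)
        = (if v = d then eind Dij d c x else 1) *
          (vind D v x * ∏ w ∈ G.neighborFinset v ∩ side G d c, eind Dij v w x) := by
    intro v hv
    by_cases hvd : v = d
    · subst hvd
      have hset : G.neighborFinset v ∩ S = insert c (G.neighborFinset v ∩ side G v c) := by
        ext w
        simp only [Finset.mem_inter, Finset.mem_insert, SimpleGraph.mem_neighborFinset]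
        constructor
        · rintro ⟨hadj, hwS⟩
          by_cases hw : w ∈ side G v c
          · exact Or.inr ⟨hadj, hw⟩
          · exact Or.inl (adj_side hG hdc' self_mem_side hadj hw).2
        · rintro (rfl | ⟨hadj, hw⟩)
          · exact ⟨hdc', hcS⟩
          · exact ⟨hadj, hsub hw⟩
      rw [hset, Finset.prod_insert (fun hc => hcns (Finset.mem_of_mem_inter_right hc)),
        if_pos rfl]
      show vind D v x * (eind Dij v c x * _) = _
      ring
    · rw [if_neg hvd, one_mul]
      have hset : G.neighborFinset v ∩ S = G.neighborFinset v ∩ side G d c := by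
        ext w
        simp only [Finset.mem_inter, SimpleGraph.mem_neighborFinset]
        constructor
        · rintro ⟨hadj, hwS⟩
          refine ⟨hadj, ?_⟩
          by_cases hw : w ∈ side G d c
          · exact hw
          · exact absurd (adj_side hG hdc' hv hadj hw).1 hvd
        · rintro ⟨hadj, hw⟩
          exact ⟨hadj, hsub hw⟩
      rw [hset]
  rw [Finset.prod_congr rfl h1, Finset.prod_mul_distrib,
    Finset.prod_ite_eq' (side G d c) d (fun _ => eind Dij d c x), if_pos self_mem_side]
  rfl

lemma bigH_split (hG : G.IsTree)
    (hsym : ∀ i j, ∀ p : ℝ × ℝ, p ∈ Dij i j ↔ p.swap ∈ Dij j i)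
    {c : V} {S A : Finset V}
    (hA : A ⊆ G.neighborFinset c) (hcS : c ∈ S)
    (hS : S.erase c = A.biUnion fun d => side G d c) (x : V → ℝ) :
    bigH G D Dij S x =
      vind D c x * ∏ d ∈ A, (eind Dij d c x * bigH G D Dij (side G d c) x) := by
  have hadj : ∀ d ∈ A, G.Adj c d := fun d hd => by
    have := hA hd; rwa [SimpleGraph.mem_neighborFinset] at this
  have hsubS : ∀ d ∈ A, side G d c ⊆ S := by
    intro d hd v hv
    have hv2 : v ∈ S.erase c := by
      rw [hS]; exact Finset.mem_biUnion.mpr ⟨d, hd, hv⟩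
    exact Finset.mem_of_mem_erase hv2
  have hpair : (A : Set V).PairwiseDisjoint fun d => side G d c := by
    intro a ha b hb hab
    show Disjoint (side G a c) (side G b c)
    rw [Finset.disjoint_left]
    intro v hv hv'
    exact sides_pairwise hG (hadj a ha) (hadj b hb) hab v hv hv'
  have hNS : G.neighborFinset c ∩ S = A := by
    ext w
    simp only [Finset.mem_inter, SimpleGraph.mem_neighborFinset]
    constructor
    · rintro ⟨hw, hwS⟩
      have hwc : w ≠ c := hw.ne'
      have : w ∈ S.erase c := Finset.mem_erase.mpr ⟨hwc, hwS⟩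
      rw [hS] at this
      obtain ⟨d, hd, hwd⟩ := Finset.mem_biUnion.mp this
      have := adj_side hG (hadj d hd).symm hwd hw.symm (not_mem_side' hG (hadj d hd))
      exact this.1 ▸ hd
    · intro hw
      exact ⟨hadj w hw, hsubS w hw self_mem_side⟩
  -- decompose the product
  have step1 : bigH G D Dij S x =
      (vind D c x * ∏ d ∈ A, eind Dij c d x) *
        ∏ d ∈ A, (eind Dij d c x * bigH G D Dij (side G d c) x) := by
    unfold bigH
    rw [← Finset.mul_prod_erase S _ hcS, hNS, hS, Finset.prod_biUnion hpair,
      Finset.prod_congr rfl (fun d hd => side_prod hG (hadj d hd) hcS (hsubS d hd) x)]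
    rfl
  rw [step1, mul_assoc, ← Finset.prod_mul_distrib]
  congr 1
  refine Finset.prod_congr rfl fun d hd => ?_
  rw [eind_symm hsym c d, ← mul_assoc, eind_idem]

lemma split_prod (hG : G.IsTree)
    (hD : ∀ i, MeasurableSet (D i)) (hDij : ∀ i j, MeasurableSet (Dij i j))
    {c : V} (m : V → V → ℝ → ℝ≥0∞) (B : Finset V) :
    B ⊆ G.neighborFinset c →
    (∀ d ∈ B, ∀ x' : V → ℝ,
      (∫⋯∫⁻_(side G d c), fun y => eind Dij d c y * bigH G D Dij (side G d c) y) x'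
        = m d c (x' c)) →
    ∀ x : V → ℝ,
    (∫⋯∫⁻_(B.biUnion fun d => side G d c),
        fun y => ∏ d ∈ B, (eind Dij d c y * bigH G D Dij (side G d c) y)) x
      = ∏ d ∈ B, m d c (x c) := by
  classical
  induction B using Finset.induction_on with
  | empty => intro _ _ x; simp
  | insert d B hdB ih =>
    intro hB hrec x
    have hBc : B ⊆ G.neighborFinset c := fun v hv => hB (Finset.mem_insert_of_mem hv)
    have hdadj : G.Adj c d := by
      have := hB (Finset.mem_insert_self d B); rwa [SimpleGraph.mem_neighborFinset] at this
    have hmeasg : ∀ d' : V, Measurable fun y => eind Dij d' c y * bigH G D Dij (side G d' c) y :=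
      fun d' => (measurable_eind hDij d' c).mul (measurable_bigH hD hDij _)
    have hdisj : Disjoint (side G d c) (B.biUnion fun d' => side G d' c) := by
      rw [Finset.disjoint_left]
      intro v hv hv'
      obtain ⟨d', hd', hvd'⟩ := Finset.mem_biUnion.mp hv'
      have hne : d ≠ d' := fun h => hdB (h ▸ hd')
      have h2 := hBc hd'; rw [SimpleGraph.mem_neighborFinset] at h2
      exact sides_pairwise hG hdadj h2 hne v hv hvd'
    have hnotU : ∀ v ∈ side G d c, v ∉ (B.biUnion fun d' => side G d' c) :=
      fun v hv => Finset.disjoint_left.mp hdisj hv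
    have hcU : c ∉ (B.biUnion fun d' => side G d' c) := by
      intro hc
      obtain ⟨d', hd', hcd'⟩ := Finset.mem_biUnion.mp hc
      have h2 := hBc hd'; rw [SimpleGraph.mem_neighborFinset] at h2
      exact not_mem_side' hG h2 hcd'
    have hmeasP : Measurable fun y => ∏ d' ∈ B, (eind Dij d' c y * bigH G D Dij (side G d' c) y) :=
      Finset.measurable_prod _ fun d' _ => hmeasg d'
    have hmeasF : Measurable fun y => ∏ d' ∈ insert d B,
        (eind Dij d' c y * bigH G D Dij (side G d' c) y) :=
      Finset.measurable_prod _ fun d' _ => hmeasg d'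
    rw [Finset.biUnion_insert,
      MeasureTheory.lmarginal_union _ _ hmeasF hdisj]
    have hinner : ∀ x' : V → ℝ,
        (∫⋯∫⁻_(B.biUnion fun d' => side G d' c),
          fun y => ∏ d' ∈ insert d B, (eind Dij d' c y * bigH G D Dij (side G d' c) y)) x'
        = (eind Dij d c x' * bigH G D Dij (side G d c) x') * ∏ d' ∈ B, m d' c (x' c) := by
      intro x'
      have heq : (fun y => ∏ d' ∈ insert d B, (eind Dij d' c y * bigH G D Dij (side G d' c) y))
          = fun y => (eind Dij d c y * bigH G D Dij (side G d c) y) *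
              ∏ d' ∈ B, (eind Dij d' c y * bigH G D Dij (side G d' c) y) := by
        funext y
        exact Finset.prod_insert hdB
      rw [heq, pull_left ?_ hmeasP x',
        ih hBc (fun d' hd' => hrec d' (Finset.mem_insert_of_mem hd')) x']
      intro x'' y
      have hd_mem : d ∈ side G d c := self_mem_side
      rw [eind_update (hnotU d hd_mem) hcU, bigH_update hnotU]
    rw [funext hinner]
    have := pull_right (f := fun x' => ∏ d' ∈ B, m d' c (x' c))
      (g := fun y => eind Dij d c y * bigH G D Dij (side G d c) y)
      (s := side G d c) ?_ (hmeasg d) x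
    · rw [this, hrec d (Finset.mem_insert_self d B) x, Finset.prod_insert hdB]
    · intro x'' y
      have hcs : c ∉ side G d c := not_mem_side' hG hdadj
      simp [Function.updateFinset_def, hcs]

end Split

section Core

variable {V : Type*} [Fintype V] [DecidableEq V]
variable {G : SimpleGraph V} [DecidableRel G.Adj]
variable {D : V → Set ℝ} {Dij : V → V → Set (ℝ × ℝ)}

lemma core (hG : G.IsTree) (hD : ∀ i, MeasurableSet (D i))
    (hDij : ∀ i j, MeasurableSet (Dij i j))
    (hsym : ∀ i j, ∀ p : ℝ × ℝ, p ∈ Dij i j ↔ p.swap ∈ Dij j i)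
    (m : V → V → ℝ → ℝ≥0∞)
    (hm : ∀ i j, G.Adj i j → ∀ t : ℝ,
      m i j t = ∫⁻ x : ℝ,
        (Dij i j).indicator (1 : ℝ × ℝ → ℝ≥0∞) (x, t) *
          (D i).indicator (1 : ℝ → ℝ≥0∞) x *
          ∏ c ∈ (G.neighborFinset i).erase j, m c i x) :
    ∀ (n : ℕ) (c r : V), G.Adj c r → (side G c r).card ≤ n →
    ∀ (E : Set (ℝ × ℝ)), MeasurableSet E → ∀ x : V → ℝ,
    (∫⋯∫⁻_(side G c r),
        fun y => E.indicator (1 : ℝ × ℝ → ℝ≥0∞) (y c, y r) * bigH G D Dij (side G c r) y) x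
      = ∫⁻ t : ℝ, E.indicator (1 : ℝ × ℝ → ℝ≥0∞) (t, x r) *
          (D c).indicator (1 : ℝ → ℝ≥0∞) t *
          ∏ d ∈ (G.neighborFinset c).erase r, m d c t := by
  intro n
  induction n with
  | zero =>
    intro c r hcr hcard
    exact absurd (Finset.card_eq_zero.mp (Nat.le_zero.mp hcard))
      (Finset.nonempty_iff_ne_empty.mp ⟨c, self_mem_side⟩)
  | succ n ih =>
    intro c r hcr hcard E hE x
    set A := (G.neighborFinset c).erase r with hAdef
    set U := A.biUnion (fun d => side G d c) with hUdef
    have hcT : c ∈ side G c r := self_mem_side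
    have hTe : (side G c r).erase c = U := side_erase hG hcr
    have hcU : c ∉ U := hTe ▸ Finset.notMem_erase c _
    have hA : A ⊆ G.neighborFinset c := Finset.erase_subset _ _
    have hrT : r ∉ side G c r := not_mem_side hG hcr
    have hrU : r ∉ U := by
      rw [← hTe]
      exact fun h => hrT (Finset.mem_of_mem_erase h)
    have hmeasE : Measurable fun y : V → ℝ => E.indicator (1 : ℝ × ℝ → ℝ≥0∞) (y c, y r) :=
      (measurable_const.indicator hE).comp
        ((measurable_pi_apply c).prodMk (measurable_pi_apply r))
    have hmeasF : Measurable fun y =>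
        E.indicator (1 : ℝ × ℝ → ℝ≥0∞) (y c, y r) * bigH G D Dij (side G c r) y :=
      hmeasE.mul (measurable_bigH hD hDij _)
    have hrec : ∀ d ∈ A, ∀ x' : V → ℝ,
        (∫⋯∫⁻_(side G d c), fun y => eind Dij d c y * bigH G D Dij (side G d c) y) x'
          = m d c (x' c) := by
      intro d hd x'
      have hd' := hA hd
      rw [SimpleGraph.mem_neighborFinset] at hd'
      have hadj : G.Adj d c := hd'.symm
      have hsub : side G d c ⊆ (side G c r).erase c := by
        rw [hTe]
        exact fun v hv => Finset.mem_biUnion.mpr ⟨d, hd, hv⟩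
      have hcard' : (side G d c).card ≤ n := by
        have h1 := Finset.card_le_card hsub
        have h2 : ((side G c r).erase c).card = (side G c r).card - 1 :=
          Finset.card_erase_of_mem hcT
        have h3 : 1 ≤ (side G c r).card := Finset.card_pos.mpr ⟨c, hcT⟩
        omega
      have hmain := ih d c hadj hcard' (Dij d c) (hDij d c) x'
      rw [hm d c hadj (x' c)]
      exact hmain
    have hsplit := split_prod hG hD hDij m A hA hrec
    have hbig : ∀ y, bigH G D Dij (side G c r) y
        = vind D c y * ∏ d ∈ A, (eind Dij d c y * bigH G D Dij (side G d c) y) :=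
      fun y => bigH_split hG hsym hA hcT (hTe.trans hUdef) y
    have hinner : ∀ x' : V → ℝ,
        (∫⋯∫⁻_U, fun y =>
            E.indicator (1 : ℝ × ℝ → ℝ≥0∞) (y c, y r) * bigH G D Dij (side G c r) y) x'
          = E.indicator (1 : ℝ × ℝ → ℝ≥0∞) (x' c, x' r) * vind D c x' *
              ∏ d ∈ A, m d c (x' c) := by
      intro x'
      have heq : (fun y =>
            E.indicator (1 : ℝ × ℝ → ℝ≥0∞) (y c, y r) * bigH G D Dij (side G c r) y)
          = fun y => (E.indicator (1 : ℝ × ℝ → ℝ≥0∞) (y c, y r) * vind D c y) *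
              ∏ d ∈ A, (eind Dij d c y * bigH G D Dij (side G d c) y) := by
        funext y; rw [hbig y, mul_assoc]
      rw [heq, pull_left (g := fun y => ∏ d ∈ A, (eind Dij d c y * bigH G D Dij (side G d c) y)) ?_ (Finset.measurable_prod _ fun d _ =>
          (measurable_eind hDij d c).mul (measurable_bigH hD hDij _)) x', hsplit x']
      intro x'' y
      simp [vind, Function.updateFinset_def, hcU, hrU]
    rw [MeasureTheory.lmarginal_erase _ hmeasF hcT x]
    simp only [hTe]
    have hpt : ∀ t : ℝ,
        (∫⋯∫⁻_U, fun y =>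
            E.indicator (1 : ℝ × ℝ → ℝ≥0∞) (y c, y r) * bigH G D Dij (side G c r) y)
          (Function.update x c t)
        = E.indicator (1 : ℝ × ℝ → ℝ≥0∞) (t, x r) * (D c).indicator (1 : ℝ → ℝ≥0∞) t *
            ∏ d ∈ A, m d c t := by
      intro t
      have hv : vind D c (Function.update x c t) = (D c).indicator (1 : ℝ → ℝ≥0∞) t := by
        simp [vind]
      rw [hinner (Function.update x c t), Function.update_self,
        Function.update_of_ne hcr.ne' t x, hv]
    exact lintegral_congr hpt

end Core

lemma message_eval (hG : G.IsTree) (hD : ∀ i, MeasurableSet (D i))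
    (hDij : ∀ i j, MeasurableSet (Dij i j))
    (hsym : ∀ i j, ∀ p : ℝ × ℝ, p ∈ Dij i j ↔ p.swap ∈ Dij j i)
    (m : V → V → ℝ → ℝ≥0∞)
    (hm : ∀ i j, G.Adj i j → ∀ t : ℝ,
      m i j t = ∫⁻ x : ℝ,
        (Dij i j).indicator (1 : ℝ × ℝ → ℝ≥0∞) (x, t) *
          (D i).indicator (1 : ℝ → ℝ≥0∞) x *
          ∏ c ∈ (G.neighborFinset i).erase j, m c i x)
    {c i : V} (hci : G.Adj c i) (x' : V → ℝ) :
    (∫⋯∫⁻_(side G c i), fun y => eind Dij c i y * bigH G D Dij (side G c i) y) x'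
      = m c i (x' i) := by
  have h2 := core hG hD hDij hsym m hm (side G c i).card c i hci le_rfl
    (Dij c i) (hDij c i) x'
  rw [hm c i hci (x' i)]
  exact h2

end BQMP

open BQMP in
/-- Proposition 6, bivariate queries via message passing: let `{i,j}` be an
edge and `Q ⊆ ℝ × ℝ` a measurable query on `(x_i, x_j)`. With the updated message
`m*_{j→i}(t) = ∫ (∏_{c ∈ N(j)∖{i}} m_{c→j}(y)) · 1[(t,y) ∈ D_{ij} ∩ Q] · 1[y ∈ D_j] dy`,
the volume of `Δ ∩ {x : (x_i, x_j) ∈ Q}` equals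
`∫ 1[t ∈ D_i] · m*_{j→i}(t) · ∏_{c ∈ N(i)∖{j}} m_{c→i}(t) dt`. -/
theorem bivariate_query_message_passing {V : Type*} [Fintype V] [DecidableEq V]
    (G : SimpleGraph V) [DecidableRel G.Adj] (hG : G.IsTree)
    (D : V → Set ℝ) (hD : ∀ i, MeasurableSet (D i))
    (Dij : V → V → Set (ℝ × ℝ)) (hDij : ∀ i j, MeasurableSet (Dij i j))
    (hsym : ∀ i j, ∀ p : ℝ × ℝ, p ∈ Dij i j ↔ p.swap ∈ Dij j i)
    (m : V → V → ℝ → ℝ≥0∞)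
    (hm : ∀ i j, G.Adj i j → ∀ t : ℝ,
      m i j t = ∫⁻ x : ℝ,
        (Dij i j).indicator (1 : ℝ × ℝ → ℝ≥0∞) (x, t) *
          (D i).indicator (1 : ℝ → ℝ≥0∞) x *
          ∏ c ∈ (G.neighborFinset i).erase j, m c i x)
    (i j : V) (hij : G.Adj i j) (Q : Set (ℝ × ℝ)) (hQ : MeasurableSet Q) :
    volume (mpModel G D Dij ∩ {x : V → ℝ | (x i, x j) ∈ Q})
      = ∫⁻ t : ℝ,
          (D i).indicator (1 : ℝ → ℝ≥0∞) t *
            (∫⁻ y : ℝ,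
              (∏ c ∈ (G.neighborFinset j).erase i, m c j y) *
                (Dij i j ∩ Q).indicator (1 : ℝ × ℝ → ℝ≥0∞) (t, y) *
                (D j).indicator (1 : ℝ → ℝ≥0∞) y) *
            ∏ c ∈ (G.neighborFinset i).erase j, m c i t := by
  classical
  set Qs : Set (ℝ × ℝ) := Dij i j ∩ Q with hQsdef
  have hQsm : MeasurableSet Qs := (hDij i j).inter hQ
  set E' : Set (ℝ × ℝ) := Prod.swap ⁻¹' Qs with hE'def
  have hE'm : MeasurableSet E' := hQsm.preimage measurable_swap
  set F : (V → ℝ) → ℝ≥0∞ := fun x =>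
    Qs.indicator (1 : ℝ × ℝ → ℝ≥0∞) (x i, x j) * bigH G D Dij Finset.univ x with hFdef
  have hFmeas : Measurable F :=
    ((measurable_const.indicator hQsm).comp
      ((measurable_pi_apply i).prodMk (measurable_pi_apply j))).mul
      (measurable_bigH hD hDij _)
  -- pointwise identity between indicator of the model region and F
  have hpoint : ∀ x : V → ℝ,
      (mpModel G D Dij ∩ {x : V → ℝ | (x i, x j) ∈ Q}).indicator
        (1 : (V → ℝ) → ℝ≥0∞) x = F x := by
    intro x
    by_cases hx : x ∈ mpModel G D Dij ∩ {x : V → ℝ | (x i, x j) ∈ Q}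
    · rw [Set.indicator_of_mem hx]
      obtain ⟨⟨hxD, hxE⟩, hxQ⟩ := hx
      have h1 : Qs.indicator (1 : ℝ × ℝ → ℝ≥0∞) (x i, x j) = 1 := by
        rw [Set.indicator_of_mem (show ((x i, x j) : ℝ × ℝ) ∈ Qs from ⟨hxE i j hij, hxQ⟩)]
        rfl
      have h2 : bigH G D Dij Finset.univ x = 1 := by
        unfold bigH
        refine Finset.prod_eq_one fun v _ => ?_
        have hv : vind D v x = 1 := by
          rw [vind, Set.indicator_of_mem (hxD v)]; rfl
        have he : ∀ w ∈ G.neighborFinset v ∩ Finset.univ, eind Dij v w x = 1 := by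
          intro w hw
          have hadj : G.Adj v w := by
            have h3 := Finset.mem_of_mem_inter_left hw
            rwa [SimpleGraph.mem_neighborFinset] at h3
          rw [eind, Set.indicator_of_mem (hxE v w hadj)]; rfl
        rw [hv, Finset.prod_eq_one he, mul_one]
      show _ = F x
      rw [hFdef]
      simp only []
      rw [h1, h2, mul_one]
      rfl
    · rw [Set.indicator_of_notMem hx]
      symm
      rw [hFdef]
      simp only []
      by_cases hD1 : ∀ v, x v ∈ D v
      · by_cases hE1 : ∀ v w, G.Adj v w → ((x v, x w) : ℝ × ℝ) ∈ Dij v w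
        · have hQ1 : ((x i, x j) : ℝ × ℝ) ∉ Qs := by
            intro hmem
            exact hx ⟨⟨hD1, hE1⟩, hmem.2⟩
          rw [Set.indicator_of_notMem hQ1, zero_mul]
        · push_neg at hE1
          obtain ⟨v, w, hvw, hnot⟩ := hE1
          have h0 : bigH G D Dij Finset.univ x = 0 := by
            unfold bigH
            refine Finset.prod_eq_zero (Finset.mem_univ v) ?_
            have hwmem : w ∈ G.neighborFinset v ∩ Finset.univ := by
              refine Finset.mem_inter_of_mem ?_ (Finset.mem_univ w)
              rw [SimpleGraph.mem_neighborFinset]; exact hvw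
            have he : eind Dij v w x = 0 := by
              rw [eind, Set.indicator_of_notMem hnot]
            rw [Finset.prod_eq_zero hwmem he, mul_zero]
          rw [h0, mul_zero]
      · push_neg at hD1
        obtain ⟨v, hv⟩ := hD1
        have h0 : bigH G D Dij Finset.univ x = 0 := by
          unfold bigH
          refine Finset.prod_eq_zero (Finset.mem_univ v) ?_
          have hvz : vind D v x = 0 := by
            rw [vind, Set.indicator_of_notMem hv]
          rw [hvz, zero_mul]
        rw [h0, mul_zero]
  have hSeq : mpModel G D Dij ∩ {x : V → ℝ | (x i, x j) ∈ Q} = F ⁻¹' {1} := by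
    ext x
    simp only [Set.mem_preimage, Set.mem_singleton_iff]
    constructor
    · intro hx
      have h4 := hpoint x
      rw [Set.indicator_of_mem hx] at h4
      exact h4.symm ▸ rfl
    · intro hx
      by_contra hxs
      have h4 := hpoint x
      rw [Set.indicator_of_notMem hxs, hx] at h4
      exact one_ne_zero h4.symm
  have hSmeas : MeasurableSet (mpModel G D Dij ∩ {x : V → ℝ | (x i, x j) ∈ Q}) := by
    rw [hSeq]; exact hFmeas (measurableSet_singleton 1)
  have h1 : volume (mpModel G D Dij ∩ {x : V → ℝ | (x i, x j) ∈ Q}) = ∫⁻ x : V → ℝ, F x := by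
    rw [← MeasureTheory.lintegral_indicator_one hSmeas]
    exact lintegral_congr hpoint
  -- setup for the marginal computation
  have hjA : j ∈ G.neighborFinset i := by rw [SimpleGraph.mem_neighborFinset]; exact hij
  set B : Finset V := (G.neighborFinset i).erase j with hBdef
  set W : Finset V := B.biUnion (fun c => side G c i) with hWdef
  have hUe : Finset.univ.erase i = side G j i ∪ W := by
    rw [univ_erase hG i, ← Finset.insert_erase hjA, Finset.biUnion_insert]
  have hdisj : Disjoint (side G j i) W := by
    rw [Finset.disjoint_left]
    intro v hv hv'
    obtain ⟨c, hc, hvc⟩ := Finset.mem_biUnion.mp hv'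
    have hcadj : G.Adj i c := by
      have h5 := Finset.mem_of_mem_erase hc
      rwa [SimpleGraph.mem_neighborFinset] at h5
    exact sides_pairwise hG hij hcadj (fun h => (Finset.mem_erase.mp hc).1 h.symm) v hv hvc
  have hiW : i ∉ W := by
    intro h
    obtain ⟨c, hc, hic⟩ := Finset.mem_biUnion.mp h
    have hcadj : G.Adj i c := by
      have h5 := Finset.mem_of_mem_erase hc
      rwa [SimpleGraph.mem_neighborFinset] at h5
    exact not_mem_side' hG hcadj hic
  have hjW : j ∉ W := Finset.disjoint_left.mp hdisj self_mem_side
  have hsjW : ∀ v ∈ side G j i, v ∉ W := fun v hv => Finset.disjoint_left.mp hdisj hv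
  have hisj : i ∉ side G j i := not_mem_side' hG hij
  have hrecB : ∀ c ∈ B, ∀ x'' : V → ℝ,
      (∫⋯∫⁻_(side G c i), fun y => eind Dij c i y * bigH G D Dij (side G c i) y) x''
        = m c i (x'' i) := by
    intro c hc x''
    have hcadj : G.Adj i c := by
      have h5 := Finset.mem_of_mem_erase hc
      rwa [SimpleGraph.mem_neighborFinset] at h5
    exact message_eval hG hD hDij hsym m hm hcadj.symm x''
  have hsplitW := split_prod hG hD hDij m B (Finset.erase_subset _ _) hrecB
  have hbigU : ∀ y, bigH G D Dij Finset.univ y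
      = vind D i y * ∏ c ∈ G.neighborFinset i,
          (eind Dij c i y * bigH G D Dij (side G c i) y) :=
    fun y => bigH_split hG hsym (Finset.Subset.refl _) (Finset.mem_univ i)
      (univ_erase hG i) y
  have hQe : ∀ y : V → ℝ, Qs.indicator (1 : ℝ × ℝ → ℝ≥0∞) (y i, y j) * eind Dij j i y
      = E'.indicator (1 : ℝ × ℝ → ℝ≥0∞) (y j, y i) := by
    intro y
    by_cases hmem : ((y i, y j) : ℝ × ℝ) ∈ Qs
    · have h2 : ((y j, y i) : ℝ × ℝ) ∈ E' := hmem
      have h3 : ((y j, y i) : ℝ × ℝ) ∈ Dij j i := (hsym i j (y i, y j)).mp hmem.1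
      rw [Set.indicator_of_mem hmem, Set.indicator_of_mem h2, eind, Set.indicator_of_mem h3]
      simp
    · have h2 : ((y j, y i) : ℝ × ℝ) ∉ E' := hmem
      rw [Set.indicator_of_notMem hmem, Set.indicator_of_notMem h2, zero_mul]
  have hFeq : F = fun y =>
      (vind D i y * (E'.indicator (1 : ℝ × ℝ → ℝ≥0∞) (y j, y i) *
        bigH G D Dij (side G j i) y)) *
        ∏ c ∈ B, (eind Dij c i y * bigH G D Dij (side G c i) y) := by
    funext y
    rw [hFdef]
    simp only []
    rw [hbigU y, ← hQe y,
      ← Finset.mul_prod_erase (G.neighborFinset i)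
        (fun c => eind Dij c i y * bigH G D Dij (side G c i) y) hjA]
    ring
  have hmeasE' : Measurable fun y : V → ℝ =>
      E'.indicator (1 : ℝ × ℝ → ℝ≥0∞) (y j, y i) * bigH G D Dij (side G j i) y :=
    ((measurable_const.indicator hE'm).comp
      ((measurable_pi_apply j).prodMk (measurable_pi_apply i))).mul
      (measurable_bigH hD hDij _)
  have hmeasB : Measurable fun y : V → ℝ =>
      ∏ c ∈ B, (eind Dij c i y * bigH G D Dij (side G c i) y) :=
    Finset.measurable_prod _ fun c _ =>
      (measurable_eind hDij c i).mul (measurable_bigH hD hDij _)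
  have hinnerW : ∀ x'' : V → ℝ, (∫⋯∫⁻_W, F) x''
      = (vind D i x'' * (E'.indicator (1 : ℝ × ℝ → ℝ≥0∞) (x'' j, x'' i) *
          bigH G D Dij (side G j i) x'')) * ∏ c ∈ B, m c i (x'' i) := by
    intro x''
    have hf : ∀ (x3 : V → ℝ) y,
        (fun y => vind D i y * (E'.indicator (1 : ℝ × ℝ → ℝ≥0∞) (y j, y i) *
          bigH G D Dij (side G j i) y)) (Function.updateFinset x3 W y)
        = vind D i x3 * (E'.indicator (1 : ℝ × ℝ → ℝ≥0∞) (x3 j, x3 i) *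
          bigH G D Dij (side G j i) x3) := by
      intro x3 y
      have hup : ∀ (v : V), v ∉ W → Function.updateFinset x3 W y v = x3 v := by
        intro v hv; simp [Function.updateFinset_def, hv]
      simp only []
      rw [vind_update hiW, bigH_update hsjW, hup j hjW, hup i hiW]
    rw [hFeq, pull_left hf hmeasB x'', hsplitW x'']
  have houter : ∀ x' : V → ℝ, (∫⋯∫⁻_(Finset.univ.erase i), F) x'
      = vind D i x' *
        (∫⁻ y : ℝ, E'.indicator (1 : ℝ × ℝ → ℝ≥0∞) (y, x' i) *
          (D j).indicator (1 : ℝ → ℝ≥0∞) y *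
          ∏ d ∈ (G.neighborFinset j).erase i, m d j y) *
        ∏ c ∈ B, m c i (x' i) := by
    intro x'
    have hf1 : ∀ (x3 : V → ℝ) y,
        (fun y : V → ℝ => ∏ c ∈ B, m c i (y i)) (Function.updateFinset x3 (side G j i) y)
          = ∏ c ∈ B, m c i (x3 i) := by
      intro x3 y
      have hup : Function.updateFinset x3 (side G j i) y i = x3 i := by
        simp [Function.updateFinset_def, hisj]
      simp only [hup]
    have hf2 : ∀ (x3 : V → ℝ) y,
        vind D i (Function.updateFinset x3 (side G j i) y) = vind D i x3 :=
      fun x3 y => vind_update hisj x3 y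
    rw [hUe, MeasureTheory.lmarginal_union _ F hFmeas hdisj, funext hinnerW,
      pull_right (f := fun y : V → ℝ => ∏ c ∈ B, m c i (y i))
        (g := fun y => vind D i y * (E'.indicator (1 : ℝ × ℝ → ℝ≥0∞) (y j, y i) *
          bigH G D Dij (side G j i) y)) hf1 ((measurable_vind hD i).mul hmeasE') x',
      pull_left (f := vind D i) hf2 hmeasE' x',
      core hG hD hDij hsym m hm (side G j i).card j i hij.symm le_rfl E' hE'm x']
  -- final computation
  rw [h1, MeasureTheory.volume_pi,
    MeasureTheory.lintegral_eq_lmarginal_univ (fun _ : V => (0 : ℝ)),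
    MeasureTheory.lmarginal_erase _ hFmeas (Finset.mem_univ i) _]
  refine lintegral_congr fun t => ?_
  rw [houter (Function.update (fun _ : V => (0 : ℝ)) i t), Function.update_self]
  have hv : vind D i (Function.update (fun _ : V => (0 : ℝ)) i t)
      = (D i).indicator (1 : ℝ → ℝ≥0∞) t := by
    simp [vind]
  rw [hv]
  congr 1
  congr 1
  refine lintegral_congr fun y => ?_
  have hswap : E'.indicator (1 : ℝ × ℝ → ℝ≥0∞) (y, t)
      = Qs.indicator (1 : ℝ × ℝ → ℝ≥0∞) (t, y) := by
    by_cases hmem : ((t, y) : ℝ × ℝ) ∈ Qs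
    · rw [Set.indicator_of_mem hmem,
        Set.indicator_of_mem (show ((y, t) : ℝ × ℝ) ∈ E' from hmem)]
      simp
    · rw [Set.indicator_of_notMem hmem,
        Set.indicator_of_notMem (show ((y, t) : ℝ × ℝ) ∉ E' from hmem)]
  rw [hswap]
  ring
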